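/- Mean difference between uniform distributions on concentric balls: let B_r = B(x₀, r) and B_R = B(x₀, R) be concentric balls in ℝ^d with 0 < r ≤ R, and let u_{B_r}, u_{B_R} be the corresponding uniform densities. Then for every continuously differentiable f : ℝ^d → ℝ: if d = 1, (E_{u_{B_r}}[f] − E_{u_{B_R}}[f])² ≤ R²·log(R/r)·∫ ‖∇f(x)‖² u_{B_R}(x) dx, and if d ≥ 2, (E_{u_{B_r}}[f] − E_{u_{B_R}}[f])² ≤ (R^{d+1}/((d−1)·r^{d−1}))·∫ ‖∇f(x)‖² u_{B_R}(x) dx. -/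

import Mathlib

open MeasureTheory RealInnerProductSpace

noncomputable section

abbrev Euc (d : ℕ) := EuclideanSpace ℝ (Fin d)

def IsDensity {d : ℕ} (ρ : Euc d → ℝ) : Prop :=
  (∀ x, 0 ≤ ρ x) ∧ ∫ x, ρ x = 1

def lap {d : ℕ} (f : Euc d → ℝ) (x : Euc d) : ℝ :=
  ∑ i : Fin d, fderiv ℝ (fun y => fderiv ℝ f y (EuclideanSpace.single i 1)) x (EuclideanSpace.single i 1)

def LGen {d : ℕ} (ν V : Euc d → ℝ) (x : Euc d) : ℝ :=
  ⟪gradient V x, gradient (fun y => Real.log (ν y)) x⟫ + lap V x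

structure IsLyapunov {d : ℕ} (ν V : Euc d → ℝ) (lam h : ℝ) (B : Set (Euc d)) (C : ℝ) : Prop where
  contDiff : ContDiff ℝ 2 V
  one_le : ∀ x, 1 ≤ V x
  lam_pos : 0 < lam
  h_pos : 0 < h
  C_pos : 0 < C
  bounded : Bornology.IsBounded B
  drift : ∀ x, LGen ν V x ≤ -lam * V x + h * B.indicator 1 x
  ratio : ∀ x ∈ B, ∀ y ∈ B, ν x ≤ C * ν y

def uball {d : ℕ} (x₀ : Euc d) (R : ℝ) (x : Euc d) : ℝ :=
  (Metric.closedBall x₀ R).indicator (fun _ => ((volume (Metric.closedBall x₀ R)).toReal)⁻¹) x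

def IsLyDensity {d : ℕ} (ν : Euc d → ℝ) (x₀ : Euc d) (R q a : ℝ) : Prop :=
  ∃ V lam h C, IsLyapunov ν V lam h (Metric.closedBall x₀ R) C ∧
    (1 + h * R ^ 2 * C ^ 2) / lam ≤ q ∧
    ∀ x ∈ Metric.closedBall x₀ R, uball x₀ R x ≤ a * ν x

def Vball (d : ℕ) : ℝ := (volume (Metric.closedBall (0 : Euc d) 1)).toReal

def IsLogConcave {d : ℕ} (ν : Euc d → ℝ) (c L : ℝ) : Prop :=
  ContDiff ℝ 2 (fun x => -Real.log (ν x)) ∧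
  (∀ x y : Euc d, c * ‖x - y‖ ^ 2 ≤
      ⟪gradient (fun z => -Real.log (ν z)) x - gradient (fun z => -Real.log (ν z)) y, x - y⟫) ∧
  (∀ x : Euc d, ‖fderiv ℝ (fun z => gradient (fun w => -Real.log (ν w)) z) x‖ ≤ L)

def GammaR {d : ℕ} (π πy : Euc d → ℝ) (τ ρ : ℝ) (f : Euc d × Euc d → ℝ) (x y : Euc d) : ℝ :=
  ‖gradient (fun x' => f (x', y)) x‖ ^ 2 + τ * ‖gradient (fun y' => f (x, y')) y‖ ^ 2 +
    (ρ / 2) * min 1 (π y * πy x / (π x * πy y)) * (f (y, x) - f (x, y)) ^ 2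


set_option maxHeartbeats 1000000

lemma integral_uball {d : ℕ} (x₀ : Euc d) (ρ : ℝ) (g : Euc d → ℝ) :
    ∫ x, g x * uball x₀ ρ x
      = ((volume (Metric.closedBall x₀ ρ)).toReal)⁻¹ * ∫ x in Metric.closedBall x₀ ρ, g x := by
  have h : ∀ x, g x * uball x₀ ρ x
      = (Metric.closedBall x₀ ρ).indicator
          (fun x => ((volume (Metric.closedBall x₀ ρ)).toReal)⁻¹ * g x) x := by
    intro x
    by_cases hx : x ∈ Metric.closedBall x₀ ρ <;>
      simp [uball, Set.indicator, hx, mul_comm]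
  rw [integral_congr_ae (Filter.Eventually.of_forall h), integral_indicator measurableSet_closedBall,
    integral_const_mul]

lemma integral_translate {d : ℕ} (x₀ : Euc d) (ρ : ℝ) (g : Euc d → ℝ) :
    ∫ x in Metric.closedBall x₀ ρ, g x = ∫ y in Metric.closedBall (0 : Euc d) ρ, g (x₀ + y) := by
  rw [← integral_indicator measurableSet_closedBall, ← integral_indicator measurableSet_closedBall]
  rw [← integral_add_left_eq_self (fun x => (Metric.closedBall x₀ ρ).indicator g x) x₀]
  congr 1
  ext y
  by_cases hy : y ∈ Metric.closedBall (0 : Euc d) ρ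
  · have : x₀ + y ∈ Metric.closedBall x₀ ρ := by
      simpa [Metric.mem_closedBall, dist_eq_norm] using hy
    simp [Set.indicator, this, hy]
  · have : x₀ + y ∉ Metric.closedBall x₀ ρ := by
      simp only [Metric.mem_closedBall, dist_eq_norm] at hy ⊢
      simpa using hy
    simp [Set.indicator, this, hy]

lemma integral_scale {d : ℕ} (ρ t : ℝ) (ht : 0 < t) (g : Euc d → ℝ) :
    ∫ y in Metric.closedBall (0 : Euc d) (t * ρ), g y
      = t ^ d * ∫ y in Metric.closedBall (0 : Euc d) ρ, g (t • y) := by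
  have key := Measure.integral_comp_smul (volume : Measure (Euc d))
      ((Metric.closedBall (0 : Euc d) (t * ρ)).indicator g) t
  rw [← integral_indicator measurableSet_closedBall]
  rw [← integral_indicator measurableSet_closedBall] at *
  have h2 : ∀ y : Euc d, (Metric.closedBall (0 : Euc d) (t * ρ)).indicator g (t • y)
      = (Metric.closedBall (0 : Euc d) ρ).indicator (fun y => g (t • y)) y := by
    intro y
    have hmem : t • y ∈ Metric.closedBall (0 : Euc d) (t * ρ) ↔ y ∈ Metric.closedBall (0 : Euc d) ρ := by
      simp only [Metric.mem_closedBall, dist_zero_right, norm_smul, Real.norm_eq_abs,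
        abs_of_pos ht]
      constructor
      · intro h; nlinarith [norm_nonneg y]
      · intro h; nlinarith [norm_nonneg y]
    by_cases hy : y ∈ Metric.closedBall (0 : Euc d) ρ
    · rw [Set.indicator_of_mem (hmem.2 hy), Set.indicator_of_mem hy]
    · rw [Set.indicator_of_notMem (fun h => hy (hmem.1 h)), Set.indicator_of_notMem hy]
  rw [funext h2] at key
  rw [finrank_euclideanSpace_fin] at key
  have habs : |(t ^ d)⁻¹| = (t ^ d)⁻¹ := abs_of_nonneg (by positivity)
  rw [habs, smul_eq_mul] at key
  have htd : (t : ℝ) ^ d ≠ 0 := by positivity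
  field_simp at key ⊢
  linarith [key]


-- Cauchy-Schwarz for integrals
lemma sq_integral_mul_le {α : Type*} [MeasurableSpace α] {μ : Measure α} {u v : α → ℝ}
    (hu : MemLp u 2 μ) (hv : MemLp v 2 μ) :
    (∫ a, u a * v a ∂μ) ^ 2 ≤ (∫ a, u a ^ 2 ∂μ) * (∫ a, v a ^ 2 ∂μ) := by
  have hpq : Real.HolderConjugate 2 2 := ⟨by norm_num, by norm_num, by norm_num⟩
  have h2 : (ENNReal.ofReal (2:ℝ)) = 2 := by norm_num
  have key := integral_mul_norm_le_Lp_mul_Lq hpq (h2 ▸ hu) (h2 ▸ hv)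
  have habs : |∫ a, u a * v a ∂μ| ≤ ∫ a, ‖u a‖ * ‖v a‖ ∂μ := by
    simpa [Real.norm_eq_abs, abs_mul] using norm_integral_le_integral_norm (fun a => u a * v a) (μ := μ)
  have hnorm : ∀ (w : α → ℝ), ∫ a, ‖w a‖ ^ (2:ℝ) ∂μ = ∫ a, w a ^ 2 ∂μ := by
    intro w
    apply integral_congr_ae
    filter_upwards with a
    rw [show ((2:ℝ)) = ((2:ℕ):ℝ) by norm_num, Real.rpow_natCast, Real.norm_eq_abs, sq_abs]
  rw [hnorm u, hnorm v] at key
  have hu2 : 0 ≤ ∫ a, u a ^ 2 ∂μ := integral_nonneg fun a => sq_nonneg _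
  have hv2 : 0 ≤ ∫ a, v a ^ 2 ∂μ := integral_nonneg fun a => sq_nonneg _
  have h1 : |∫ a, u a * v a ∂μ| ≤ (∫ a, u a ^ 2 ∂μ) ^ ((1:ℝ)/2) * (∫ a, v a ^ 2 ∂μ) ^ ((1:ℝ)/2) :=
    habs.trans key
  have := sq_abs (∫ a, u a * v a ∂μ)
  calc (∫ a, u a * v a ∂μ) ^ 2 = |∫ a, u a * v a ∂μ| ^ 2 := (sq_abs _).symm
    _ ≤ ((∫ a, u a ^ 2 ∂μ) ^ ((1:ℝ)/2) * (∫ a, v a ^ 2 ∂μ) ^ ((1:ℝ)/2)) ^ 2 := by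
        apply pow_le_pow_left₀ (abs_nonneg _) h1
    _ = (∫ a, u a ^ 2 ∂μ) * (∫ a, v a ^ 2 ∂μ) := by
        rw [mul_pow, ← Real.rpow_natCast (_ ^ ((1:ℝ)/2)) 2, ← Real.rpow_natCast (_ ^ ((1:ℝ)/2)) 2,
          ← Real.rpow_mul hu2, ← Real.rpow_mul hv2]
        norm_num

lemma setIntegral_scale_ball {d : ℕ} (x₀ : Euc d) (R t : ℝ) (ht : 0 < t) (g : Euc d → ℝ) :
    ∫ x in Metric.closedBall x₀ (t * R), g x
      = t ^ d * ∫ x in Metric.closedBall x₀ R, g (x₀ + t • (x - x₀)) := by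
  rw [integral_translate, integral_scale R t ht (fun y => g (x₀ + y)),
    integral_translate x₀ R (fun x => g (x₀ + t • (x - x₀)))]
  simp

lemma key_ineq (d : ℕ) (hd : 1 ≤ d) (x₀ : Euc d) (r R : ℝ) (hr : 0 < r) (hrR : r ≤ R)
    (f : Euc d → ℝ) (hf : ContDiff ℝ 1 f) :
    ((∫ x, f x * uball x₀ r x) - ∫ x, f x * uball x₀ R x) ^ 2
      ≤ (∫ s in Set.Ioc (r/R) 1, ((s:ℝ) ^ d)⁻¹) *
          (R ^ 2 * ∫ x, ‖gradient f x‖ ^ 2 * uball x₀ R x) := by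
  have hR : 0 < R := hr.trans_le hrR
  set t : ℝ := r / R with htdef
  have ht : 0 < t := div_pos hr hR
  have ht1 : t ≤ 1 := (div_le_one hR).2 hrR
  have htR : t * R = r := div_mul_cancel₀ r hR.ne'
  set B : Set (Euc d) := Metric.closedBall x₀ R with hBdef
  set VR : ℝ := (volume B).toReal with hVRdef
  have hVRpos : 0 < VR := by
    refine ENNReal.toReal_pos ?_ measure_closedBall_lt_top.ne
    exact (Metric.measure_closedBall_pos volume x₀ hR).ne'
  have hBfin : IsFiniteMeasure (volume.restrict B) :=
    ⟨by rw [Measure.restrict_apply_univ]; exact measure_closedBall_lt_top⟩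
  have hIocfin : IsFiniteMeasure (volume.restrict (Set.Ioc t 1)) :=
    ⟨by rw [Measure.restrict_apply_univ]; exact measure_Ioc_lt_top⟩
  -- continuity facts
  have hfc : Continuous f := hf.continuous
  have hfd : Differentiable ℝ f := hf.differentiable one_ne_zero
  have hfderc : Continuous (fderiv ℝ f) := hf.continuous_fderiv one_ne_zero
  have hgradnorm : ∀ y, ‖gradient f y‖ = ‖fderiv ℝ f y‖ := fun y => by
    rw [gradient]; exact LinearIsometryEquiv.norm_map _ _
  have hgradc : Continuous fun y => ‖gradient f y‖ ^ 2 := by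
    have : (fun y => ‖gradient f y‖ ^ 2) = fun y => ‖fderiv ℝ f y‖ ^ 2 := by
      funext y; rw [hgradnorm]
    rw [this]; exact (hfderc.norm).pow 2
  -- the directional derivative function
  set g : ℝ → Euc d → ℝ := fun s x => fderiv ℝ f (x₀ + s • (x - x₀)) (x - x₀) with hgdef
  have hgcont : Continuous fun p : Euc d × ℝ => g p.2 p.1 := by
    apply Continuous.clm_apply
    · exact hfderc.comp (by fun_prop)
    · fun_prop
  have hgcont1 : ∀ x : Euc d, Continuous fun s => g s x := fun x =>
    hgcont.comp (Continuous.prodMk_right x)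
  have hgcont2 : ∀ s : ℝ, Continuous fun x : Euc d => g s x := fun s =>
    hgcont.comp (continuous_id.prodMk continuous_const)
  -- uniform bound on g over B × Icc t 1
  obtain ⟨C, hC⟩ : ∃ C, ∀ p ∈ B ×ˢ Set.Icc t 1, ‖g p.2 p.1‖ ≤ C := by
    obtain ⟨C, hC⟩ := ((isCompact_closedBall x₀ R).prod isCompact_Icc).exists_bound_of_continuousOn
      hgcont.continuousOn
    exact ⟨C, hC⟩
  have hC0 : 0 ≤ C := le_trans (norm_nonneg _) (hC (x₀, t) (by
    simp [hBdef, Set.mem_prod, Metric.mem_closedBall, hR.le, ht1, le_refl]))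
  -- Step A : rewrite the two means
  have hVr : (volume (Metric.closedBall x₀ r)).toReal = t ^ d * VR := by
    rw [hVRdef, hBdef, Measure.addHaar_closedBall' volume x₀ hr.le,
      Measure.addHaar_closedBall' volume x₀ hR.le, finrank_euclideanSpace_fin]
    rw [ENNReal.toReal_mul, ENNReal.toReal_mul, ENNReal.toReal_ofReal (by positivity),
      ENNReal.toReal_ofReal (by positivity), ← mul_assoc]
    congr 1
    rw [← htR, mul_pow]
  have hIr : ∫ x, f x * uball x₀ r x = VR⁻¹ * ∫ x in B, f (x₀ + t • (x - x₀)) := by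
    rw [integral_uball, hVr, ← htR, setIntegral_scale_ball x₀ R t ht f]
    rw [mul_inv, mul_comm (t ^ d)⁻¹ VR⁻¹, mul_assoc, ← mul_assoc (t ^ d)⁻¹,
      inv_mul_cancel₀ (by positivity : (t:ℝ) ^ d ≠ 0), one_mul]
  have hIR : ∫ x, f x * uball x₀ R x = VR⁻¹ * ∫ x in B, f x := integral_uball x₀ R f
  -- integrability of the two integrands on B
  have hint1 : IntegrableOn (fun x => f (x₀ + t • (x - x₀))) B volume :=
    ((hfc.comp (by fun_prop)).continuousOn).integrableOn_compact (isCompact_closedBall x₀ R)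
  have hint2 : IntegrableOn f B volume :=
    hfc.continuousOn.integrableOn_compact (isCompact_closedBall x₀ R)
  have hD : (∫ x, f x * uball x₀ r x) - ∫ x, f x * uball x₀ R x
      = VR⁻¹ * ∫ x in B, (f (x₀ + t • (x - x₀)) - f x) := by
    rw [hIr, hIR, ← mul_sub, integral_sub hint1 hint2]
  -- Step B : FTC
  have hFTC : ∀ x : Euc d, f (x₀ + t • (x - x₀)) - f x = - ∫ s in Set.Ioc t 1, g s x := by
    intro x
    have hderiv : ∀ s ∈ Set.uIcc t 1, HasDerivAt (fun s : ℝ => f (x₀ + s • (x - x₀))) (g s x) s := by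
      intro s _
      have h1 : HasDerivAt (fun s : ℝ => x₀ + s • (x - x₀)) (x - x₀) s := by
        simpa using ((hasDerivAt_id s).smul_const (x - x₀)).const_add x₀
      exact (hfd (x₀ + s • (x - x₀))).hasFDerivAt.comp_hasDerivAt s h1
    have hii : IntervalIntegrable (fun s => g s x) volume t 1 :=
      (hgcont1 x).intervalIntegrable t 1
    have := intervalIntegral.integral_eq_sub_of_hasDerivAt hderiv hii
    rw [intervalIntegral.integral_of_le ht1] at this
    rw [this]
    simp
  -- Step C : Fubini
  set H : ℝ → ℝ := fun s => ∫ x in B, g s x with hHdef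
  have hswap : ∫ x in B, ∫ s in Set.Ioc t 1, g s x = ∫ s in Set.Ioc t 1, H s := by
    apply integral_integral_swap
    rw [Measure.prod_restrict]
    have hsub : B ×ˢ Set.Ioc t 1 ⊆ B ×ˢ Set.Icc t 1 :=
      Set.prod_mono_right Set.Ioc_subset_Icc_self
    have h2 : IntegrableOn (fun p : Euc d × ℝ => g p.2 p.1) (B ×ˢ Set.Icc t 1) volume :=
      hgcont.continuousOn.integrableOn_compact
        ((isCompact_closedBall x₀ R).prod isCompact_Icc)
    have h3 := h2.mono_set hsub
    rw [← Measure.volume_eq_prod]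
    exact h3
  have hDval : (∫ x, f x * uball x₀ r x) - ∫ x, f x * uball x₀ R x
      = - (VR⁻¹ * ∫ s in Set.Ioc t 1, H s) := by
    rw [hD, ← hswap]
    rw [integral_congr_ae (Filter.Eventually.of_forall (fun x => hFTC x)), integral_neg, mul_neg]
  -- measurability of H
  have hHm : StronglyMeasurable H := by
    have : StronglyMeasurable fun p : ℝ × Euc d => g p.1 p.2 :=
      (hgcont.comp (continuous_swap)).stronglyMeasurable
    exact this.integral_prod_right'
  -- bound for H
  have hHbound : ∀ s ∈ Set.Ioc t 1, |H s| ≤ C * VR := by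
    intro s hs
    have : ‖∫ x in B, g s x‖ ≤ C * (volume B).toReal := by
      apply norm_setIntegral_le_of_norm_le_const measure_closedBall_lt_top
      · intro x hx
        exact hC (x, s) ⟨hx, Set.Ioc_subset_Icc_self hs⟩
    simpa [Real.norm_eq_abs, mul_comm] using this
  -- grad integral
  set Igrad : ℝ := ∫ x in B, ‖gradient f x‖ ^ 2 with hIgraddef
  have hIgrad_nonneg : 0 ≤ Igrad := setIntegral_nonneg measurableSet_closedBall
    (fun x _ => by positivity)
  have hIgradInt : IntegrableOn (fun x => ‖gradient f x‖ ^ 2) B volume :=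
    hgradc.continuousOn.integrableOn_compact (isCompact_closedBall x₀ R)
  -- Step E : pointwise bound s^d * H s ^ 2 ≤ R^2 * VR * Igrad
  have hpoint : ∀ s ∈ Set.Ioc t 1, s ^ d * H s ^ 2 ≤ R ^ 2 * VR * Igrad := by
    intro s hs
    have hs0 : 0 < s := lt_trans ht hs.1
    have hs1 : s ≤ 1 := hs.2
    -- (i) Cauchy-Schwarz in x
    have hgs_meas : AEStronglyMeasurable (fun x : Euc d => g s x) (volume.restrict B) :=
      (hgcont2 s).aestronglyMeasurable
    have hgs_mem : MemLp (fun x : Euc d => g s x) 2 (volume.restrict B) := by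
      refine MemLp.of_bound hgs_meas C ?_
      rw [ae_restrict_iff' measurableSet_closedBall]
      filter_upwards with x hx
      exact hC (x, s) ⟨hx, ⟨le_of_lt hs.1, hs1⟩⟩
    have hone_mem : MemLp (fun _ : Euc d => (1:ℝ)) 2 (volume.restrict B) := memLp_const 1
    have hCS := sq_integral_mul_le hone_mem hgs_mem
    simp only [one_mul, one_pow] at hCS
    have hVRint : ∫ _ in B, (1:ℝ) = VR := by
      simp [hVRdef, Measure.restrict_apply_univ]
      rfl
    rw [hVRint] at hCS
    -- (ii) pointwise bound of g^2
    have hint_g2 : IntegrableOn (fun x => g s x ^ 2) B volume :=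
      ((hgcont2 s).pow 2).continuousOn.integrableOn_compact (isCompact_closedBall x₀ R)
    have hint_comp : IntegrableOn (fun x => R ^ 2 * ‖gradient f (x₀ + s • (x - x₀))‖ ^ 2) B volume := by
      apply Integrable.const_mul
      exact ((hgradc.comp (by fun_prop)).continuousOn).integrableOn_compact
        (isCompact_closedBall x₀ R)
    have hg2 : ∫ x in B, g s x ^ 2 ≤ ∫ x in B, R ^ 2 * ‖gradient f (x₀ + s • (x - x₀))‖ ^ 2 := by
      apply setIntegral_mono_on hint_g2 hint_comp measurableSet_closedBall
      intro x hx
      have hxR : ‖x - x₀‖ ≤ R := by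
        rw [← dist_eq_norm]; exact Metric.mem_closedBall.1 hx
      have h1 : |g s x| ≤ ‖fderiv ℝ f (x₀ + s • (x - x₀))‖ * ‖x - x₀‖ := by
        simpa only [Real.norm_eq_abs] using (fderiv ℝ f (x₀ + s • (x - x₀))).le_opNorm (x - x₀)
      have h2 : |g s x| ≤ ‖gradient f (x₀ + s • (x - x₀))‖ * R := by
        rw [hgradnorm]
        refine h1.trans ?_
        exact mul_le_mul_of_nonneg_left hxR (norm_nonneg _)
      calc g s x ^ 2 = |g s x| ^ 2 := (sq_abs _).symm
        _ ≤ (‖gradient f (x₀ + s • (x - x₀))‖ * R) ^ 2 :=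
            pow_le_pow_left₀ (abs_nonneg _) h2 2
        _ = R ^ 2 * ‖gradient f (x₀ + s • (x - x₀))‖ ^ 2 := by ring
    -- (iii) scaling
    have hscale : ∫ x in B, ‖gradient f (x₀ + s • (x - x₀))‖ ^ 2
        = (s ^ d)⁻¹ * ∫ x in Metric.closedBall x₀ (s * R), ‖gradient f x‖ ^ 2 := by
      rw [setIntegral_scale_ball x₀ R s hs0 (fun x => ‖gradient f x‖ ^ 2)]
      rw [← mul_assoc, inv_mul_cancel₀ (by positivity), one_mul]
    -- (iv) monotonicity in the domain
    have hmono : ∫ x in Metric.closedBall x₀ (s * R), ‖gradient f x‖ ^ 2 ≤ Igrad := by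
      apply setIntegral_mono_set hIgradInt
      · filter_upwards with x
        positivity
      · have : Metric.closedBall x₀ (s * R) ⊆ B := by
          apply Metric.closedBall_subset_closedBall
          nlinarith
        exact this.eventuallyLE
    -- combine
    have hH2 : H s ^ 2 ≤ VR * (R ^ 2 * ((s ^ d)⁻¹ * Igrad)) := by
      refine hCS.trans ?_
      apply mul_le_mul_of_nonneg_left _ hVRpos.le
      calc ∫ x in B, g s x ^ 2 ≤ ∫ x in B, R ^ 2 * ‖gradient f (x₀ + s • (x - x₀))‖ ^ 2 := hg2
        _ = R ^ 2 * ((s ^ d)⁻¹ * ∫ x in Metric.closedBall x₀ (s * R), ‖gradient f x‖ ^ 2) := by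
            rw [integral_const_mul, hscale]
        _ ≤ R ^ 2 * ((s ^ d)⁻¹ * Igrad) := by
            apply mul_le_mul_of_nonneg_left _ (by positivity)
            exact mul_le_mul_of_nonneg_left hmono (by positivity)
    calc s ^ d * H s ^ 2 ≤ s ^ d * (VR * (R ^ 2 * ((s ^ d)⁻¹ * Igrad))) :=
          mul_le_mul_of_nonneg_left hH2 (by positivity)
      _ = R ^ 2 * VR * Igrad * (s ^ d * (s ^ d)⁻¹) := by ring
      _ = R ^ 2 * VR * Igrad := by
          rw [mul_inv_cancel₀ (by positivity), mul_one]
  -- Step D : Cauchy-Schwarz in s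
  set u : ℝ → ℝ := fun s => Real.sqrt ((s ^ d)⁻¹) with hudef
  set v : ℝ → ℝ := fun s => Real.sqrt (s ^ d) * H s with hvdef
  have hu_meas : Measurable u :=
    Real.continuous_sqrt.measurable.comp ((measurable_id.pow_const d).inv)
  have hv_meas : Measurable v :=
    (Real.continuous_sqrt.measurable.comp (measurable_id.pow_const d)).mul hHm.measurable
  have hu_mem : MemLp u 2 (volume.restrict (Set.Ioc t 1)) := by
    refine MemLp.of_bound hu_meas.aestronglyMeasurable (Real.sqrt ((t ^ d)⁻¹)) ?_
    rw [ae_restrict_iff' measurableSet_Ioc]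
    filter_upwards with s hs
    have hts : 0 < s := lt_trans ht hs.1
    have h1 : (s ^ d)⁻¹ ≤ (t ^ d)⁻¹ := by
      apply inv_anti₀ (by positivity)
      exact pow_le_pow_left₀ ht.le hs.1.le d
    rw [Real.norm_eq_abs, abs_of_nonneg (Real.sqrt_nonneg _)]
    exact Real.sqrt_le_sqrt h1
  have hv_mem : MemLp v 2 (volume.restrict (Set.Ioc t 1)) := by
    refine MemLp.of_bound hv_meas.aestronglyMeasurable (C * VR) ?_
    rw [ae_restrict_iff' measurableSet_Ioc]
    filter_upwards with s hs
    have hts : 0 < s := lt_trans ht hs.1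
    have hsd1 : s ^ d ≤ 1 := pow_le_one₀ hts.le hs.2
    have h1 : Real.sqrt (s ^ d) ≤ 1 := Real.sqrt_le_one.2 hsd1
    rw [Real.norm_eq_abs, hvdef, abs_mul, abs_of_nonneg (Real.sqrt_nonneg _)]
    calc Real.sqrt (s ^ d) * |H s| ≤ 1 * (C * VR) := by
          apply mul_le_mul h1 (hHbound s hs) (abs_nonneg _) zero_le_one
      _ = C * VR := one_mul _
  have hCS2 := sq_integral_mul_le hu_mem hv_mem
  have huv : ∫ s in Set.Ioc t 1, u s * v s = ∫ s in Set.Ioc t 1, H s := by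
    apply integral_congr_ae
    rw [Filter.EventuallyEq, ae_restrict_iff' measurableSet_Ioc]
    filter_upwards with s hs
    have hts : 0 < s := lt_trans ht hs.1
    have hsd : (0:ℝ) < s ^ d := by positivity
    rw [hudef, hvdef]
    simp only
    rw [Real.sqrt_inv, ← mul_assoc, inv_mul_cancel₀ (by
      simpa using Real.sqrt_ne_zero'.2 hsd), one_mul]
  have hu2 : ∫ s in Set.Ioc t 1, u s ^ 2 = ∫ s in Set.Ioc t 1, (s ^ d)⁻¹ := by
    apply integral_congr_ae
    rw [Filter.EventuallyEq, ae_restrict_iff' measurableSet_Ioc]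
    filter_upwards with s hs
    have hts : 0 < s := lt_trans ht hs.1
    rw [hudef]
    exact Real.sq_sqrt (by positivity)
  have hv2 : ∫ s in Set.Ioc t 1, v s ^ 2 = ∫ s in Set.Ioc t 1, s ^ d * H s ^ 2 := by
    apply integral_congr_ae
    rw [Filter.EventuallyEq, ae_restrict_iff' measurableSet_Ioc]
    filter_upwards with s hs
    have hts : 0 < s := lt_trans ht hs.1
    rw [hvdef]
    simp only
    rw [mul_pow, Real.sq_sqrt (by positivity : (0:ℝ) ≤ s ^ d)]
  -- Step F : bound the second factor
  have hv2int : IntegrableOn (fun s => s ^ d * H s ^ 2) (Set.Ioc t 1) volume := by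
    rw [IntegrableOn, ← memLp_one_iff_integrable]
    refine MemLp.of_bound
      (((measurable_id.pow_const d).mul (hHm.measurable.pow_const 2)).aestronglyMeasurable)
      ((C * VR) ^ 2) ?_
    rw [ae_restrict_iff' measurableSet_Ioc]
    filter_upwards with s hs
    have hts : 0 < s := lt_trans ht hs.1
    have hsd1 : s ^ d ≤ 1 := pow_le_one₀ hts.le hs.2
    rw [Real.norm_eq_abs, abs_mul, abs_of_nonneg (by positivity : (0:ℝ) ≤ s ^ d), abs_pow]
    calc s ^ d * |H s| ^ 2 ≤ 1 * |H s| ^ 2 :=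
          mul_le_mul_of_nonneg_right hsd1 (by positivity)
      _ = |H s| ^ 2 := one_mul _
      _ ≤ (C * VR) ^ 2 := pow_le_pow_left₀ (abs_nonneg _) (hHbound s hs) 2
  have hconst_int : IntegrableOn (fun _ : ℝ => R ^ 2 * VR * Igrad) (Set.Ioc t 1) volume := by
    exact integrableOn_const measure_Ioc_lt_top.ne
  have hF : ∫ s in Set.Ioc t 1, s ^ d * H s ^ 2 ≤ R ^ 2 * VR * Igrad := by
    calc ∫ s in Set.Ioc t 1, s ^ d * H s ^ 2 ≤ ∫ _ in Set.Ioc t 1, R ^ 2 * VR * Igrad :=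
          setIntegral_mono_on hv2int hconst_int measurableSet_Ioc hpoint
      _ = (volume (Set.Ioc t 1)).toReal * (R ^ 2 * VR * Igrad) := by
          rw [setIntegral_const, smul_eq_mul]
          rfl
      _ ≤ 1 * (R ^ 2 * VR * Igrad) := by
          apply mul_le_mul_of_nonneg_right _ (by positivity)
          rw [Real.volume_Ioc]
          rw [ENNReal.toReal_ofReal (by linarith)]
          linarith
      _ = R ^ 2 * VR * Igrad := one_mul _
  -- assemble everything
  have hJ_nonneg : 0 ≤ ∫ s in Set.Ioc t 1, (s ^ d)⁻¹ :=
    setIntegral_nonneg measurableSet_Ioc fun s hs => by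
      have : 0 < s := lt_trans ht hs.1
      positivity
  have hIuball : ∫ x, ‖gradient f x‖ ^ 2 * uball x₀ R x = VR⁻¹ * Igrad :=
    integral_uball x₀ R _
  rw [hDval, hIuball]
  rw [neg_sq, mul_pow]
  calc (VR⁻¹) ^ 2 * (∫ s in Set.Ioc t 1, H s) ^ 2
      = (VR⁻¹) ^ 2 * (∫ s in Set.Ioc t 1, u s * v s) ^ 2 := by rw [huv]
    _ ≤ (VR⁻¹) ^ 2 * ((∫ s in Set.Ioc t 1, u s ^ 2) * ∫ s in Set.Ioc t 1, v s ^ 2) := by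
        apply mul_le_mul_of_nonneg_left hCS2 (by positivity)
    _ = (VR⁻¹) ^ 2 * ((∫ s in Set.Ioc t 1, (s ^ d)⁻¹) * ∫ s in Set.Ioc t 1, s ^ d * H s ^ 2) := by
        rw [hu2, hv2]
    _ ≤ (VR⁻¹) ^ 2 * ((∫ s in Set.Ioc t 1, (s ^ d)⁻¹) * (R ^ 2 * VR * Igrad)) := by
        apply mul_le_mul_of_nonneg_left _ (by positivity)
        exact mul_le_mul_of_nonneg_left hF hJ_nonneg
    _ = (∫ s in Set.Ioc t 1, (s ^ d)⁻¹) * (R ^ 2 * (VR⁻¹ * Igrad)) * (VR⁻¹ * VR) := by ring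
    _ = (∫ s in Set.Ioc t 1, (s ^ d)⁻¹) * (R ^ 2 * (VR⁻¹ * Igrad)) := by
        rw [inv_mul_cancel₀ hVRpos.ne', mul_one]

lemma uball_nonneg {d : ℕ} (x₀ : Euc d) (R : ℝ) (x : Euc d) : 0 ≤ uball x₀ R x :=
  Set.indicator_nonneg (fun _ _ => inv_nonneg.2 ENNReal.toReal_nonneg) x


theorem mean_difference_concentric_uniform_aux
    (d : ℕ) (hd : 1 ≤ d) (x₀ : Euc d) (r R : ℝ) (hr : 0 < r) (hrR : r ≤ R)
    (f : Euc d → ℝ) (hf : ContDiff ℝ 1 f) :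
    (d = 1 →
      ((∫ x, f x * uball x₀ r x) - ∫ x, f x * uball x₀ R x) ^ 2
        ≤ R ^ 2 * Real.log (R / r) * ∫ x, ‖gradient f x‖ ^ 2 * uball x₀ R x) ∧
    (2 ≤ d →
      ((∫ x, f x * uball x₀ r x) - ∫ x, f x * uball x₀ R x) ^ 2
        ≤ (R ^ (d + 1) / (((d : ℝ) - 1) * r ^ (d - 1))) *
            ∫ x, ‖gradient f x‖ ^ 2 * uball x₀ R x) := by
  have hR : 0 < R := hr.trans_le hrR
  set t : ℝ := r / R with htdef
  have ht : 0 < t := div_pos hr hR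
  have ht1 : t ≤ 1 := (div_le_one hR).2 hrR
  have h0uIcc : (0:ℝ) ∉ Set.uIcc t 1 := by
    rw [Set.uIcc_of_le ht1]
    exact fun h => absurd h.1 (not_le.2 ht)
  set I : ℝ := ∫ x, ‖gradient f x‖ ^ 2 * uball x₀ R x with hIdef
  have hI : 0 ≤ I :=
    integral_nonneg fun x => mul_nonneg (by positivity) (uball_nonneg x₀ R x)
  have key := key_ineq d hd x₀ r R hr hrR f hf
  constructor
  · -- d = 1
    intro hd1
    subst hd1
    have hJ : ∫ s in Set.Ioc t 1, ((s:ℝ) ^ 1)⁻¹ = Real.log (R / r) := by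
      simp only [pow_one]
      rw [← intervalIntegral.integral_of_le ht1]
      rw [show (∫ s in t..(1:ℝ), s⁻¹) = Real.log (1 / t) from integral_inv h0uIcc]
      rw [htdef, one_div, inv_div]
    rw [hJ] at key
    calc ((∫ x, f x * uball x₀ r x) - ∫ x, f x * uball x₀ R x) ^ 2
        ≤ Real.log (R / r) * (R ^ 2 * I) := key
      _ = R ^ 2 * Real.log (R / r) * I := by ring
  · -- 2 ≤ d
    intro hd2
    have hdk : d = (d - 1) + 1 := by omega
    set k : ℕ := d - 1 with hkdef
    have hk1 : 1 ≤ k := by omega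
    have hdR : ((d : ℝ) - 1) = (k : ℝ) := by
      rw [hdk]; push_cast; ring
    have hkR : (0:ℝ) < (k:ℝ) := by exact_mod_cast hk1
    have hJ : ∫ s in Set.Ioc t 1, ((s:ℝ) ^ d)⁻¹ = ((t ^ k)⁻¹ - 1) / ((d:ℝ) - 1) := by
      rw [← intervalIntegral.integral_of_le ht1]
      have hne : -(d:ℤ) ≠ -1 := by omega
      have hz := integral_zpow (a := t) (b := 1) (n := -(d:ℤ))
        (Or.inr ⟨hne, h0uIcc⟩)
      simp only [show ∀ s : ℝ, (s ^ d)⁻¹ = s ^ (-(d:ℤ)) from fun s => by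
        rw [zpow_neg, zpow_natCast]]
      rw [hz]
      have h1 : -(d:ℤ) + 1 = -(k:ℤ) := by omega
      rw [h1, one_zpow, zpow_neg, zpow_natCast]
      rw [show ((↑(-(d:ℤ)) : ℝ) + 1) = -((d:ℝ) - 1) by push_cast; ring]
      rw [div_neg]
      ring
    rw [hJ] at key
    have hdpos : (0:ℝ) < (d:ℝ) - 1 := by rw [hdR]; exact hkR
    have hJle : ((t ^ k)⁻¹ - 1) / ((d:ℝ) - 1) ≤ (t ^ k)⁻¹ / ((d:ℝ) - 1) :=
      (div_le_div_iff_of_pos_right hdpos).2 (by linarith)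
    calc ((∫ x, f x * uball x₀ r x) - ∫ x, f x * uball x₀ R x) ^ 2
        ≤ ((t ^ k)⁻¹ - 1) / ((d:ℝ) - 1) * (R ^ 2 * I) := key
      _ ≤ (t ^ k)⁻¹ / ((d:ℝ) - 1) * (R ^ 2 * I) :=
          mul_le_mul_of_nonneg_right hJle (mul_nonneg (by positivity) hI)
      _ = R ^ (d + 1) / (((d:ℝ) - 1) * r ^ (d - 1)) * I := by
          rw [hdR]
          have hRd : R ^ (d + 1) = R ^ k * R ^ 2 := by rw [hdk]; ring
          rw [hRd, htdef, div_pow, inv_div]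
          field_simp
          ring

/-- mean difference between uniform distributions on concentric balls
(Lemma 4.5 of the paper): for `0 < r ≤ R`,
`(E_{u_{B_r}}[f] − E_{u_{B_R}}[f])² ≤ R² log(R/r) ∫ ‖∇f‖² u_{B_R}` when `d = 1`, and
`(E_{u_{B_r}}[f] − E_{u_{B_R}}[f])² ≤ (R^{d+1}/((d−1) r^{d−1})) ∫ ‖∇f‖² u_{B_R}`
when `d ≥ 2`. -/
theorem mean_difference_concentric_uniform
    (d : ℕ) (hd : 1 ≤ d) (x₀ : Euc d) (r R : ℝ) (hr : 0 < r) (hrR : r ≤ R)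
    (f : Euc d → ℝ) (hf : ContDiff ℝ 1 f) :
    (d = 1 →
      ((∫ x, f x * uball x₀ r x) - ∫ x, f x * uball x₀ R x) ^ 2
        ≤ R ^ 2 * Real.log (R / r) * ∫ x, ‖gradient f x‖ ^ 2 * uball x₀ R x) ∧
    (2 ≤ d →
      ((∫ x, f x * uball x₀ r x) - ∫ x, f x * uball x₀ R x) ^ 2
        ≤ (R ^ (d + 1) / (((d : ℝ) - 1) * r ^ (d - 1))) *
            ∫ x, ‖gradient f x‖ ^ 2 * uball x₀ R x) := by
  exact mean_difference_concentric_uniform_aux d hd x₀ r R hr hrR f hf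

end
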